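/- Let X be a real N × m matrix of full column rank, y ∈ ℝ^N, c ∈ ℝ^m nonzero, c0 ∈ ℝ. Let α̂ = (XᵀX)⁻¹Xᵀy and y0² = ‖y − Xα̂‖². If c0 + cᵀα̂ = 0 and y0² = 0, then g(α) = ‖y − Xα‖²/(c0 + cᵀα)² achieves its minimum on {α : c0 + cᵀα ≠ 0}, and the set of minimizers is exactly {α̂ + λ(XᵀX)⁻¹c : λ ∈ ℝ, λ ≠ 0}; in particular the minimizer is not unique. -/

import Mathlib

open Matrix

theorem stmt_5 (N m : ℕ) (hm : m ≤ N) (X : Matrix (Fin N) (Fin m) ℝ)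
    (hX : X.rank = m) (y : Fin N → ℝ) (c : Fin m → ℝ) (hc : c ≠ 0) (c0 : ℝ) :
    let αhat : Fin m → ℝ := ((Xᵀ * X)⁻¹).mulVec (Xᵀ.mulVec y)
    let y0sq : ℝ := ∑ i, (y i - X.mulVec αhat i) ^ 2
    let g : (Fin m → ℝ) → ℝ :=
      fun α => (∑ i, (y i - X.mulVec α i) ^ 2) / (c0 + c ⬝ᵥ α) ^ 2
    c0 + c ⬝ᵥ αhat = 0 → y0sq = 0 →
      {α : Fin m → ℝ | c0 + c ⬝ᵥ α ≠ 0 ∧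
          ∀ α' : Fin m → ℝ, c0 + c ⬝ᵥ α' ≠ 0 → g α ≤ g α'} =
        {α : Fin m → ℝ | ∃ l : ℝ, l ≠ 0 ∧ α = αhat + l • ((Xᵀ * X)⁻¹).mulVec c} := by
  intro αhat y0sq g h0 hy0
  have hy0' : ∑ i, (y i - (X *ᵥ αhat) i) ^ 2 = 0 := hy0
  have hgdef : ∀ α, g α = (∑ i, (y i - (X *ᵥ α) i) ^ 2) / (c0 + c ⬝ᵥ α) ^ 2 := fun _ => rfl
  -- X has trivial kernel
  have hker : ∀ v : Fin m → ℝ, X *ᵥ v = 0 → v = 0 := by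
    have h := LinearMap.finrank_range_add_finrank_ker (X.mulVecLin)
    rw [show Module.finrank ℝ (LinearMap.range X.mulVecLin) = m from hX,
      Module.finrank_pi] at h
    simp only [Fintype.card_fin] at h
    have hk : Module.finrank ℝ (LinearMap.ker X.mulVecLin) = 0 := by omega
    intro v hv
    have : v ∈ LinearMap.ker X.mulVecLin := hv
    simpa [Submodule.finrank_eq_zero.mp hk] using this
  -- quadratic form identity
  have hQsum : ∀ v : Fin m → ℝ, v ⬝ᵥ ((Xᵀ * X) *ᵥ v) = (X *ᵥ v) ⬝ᵥ (X *ᵥ v) := by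
    intro v
    rw [← mulVec_mulVec, dotProduct_mulVec, vecMul_transpose]
  have hA : (Xᵀ * X).PosDef := by
    refine PosDef.of_dotProduct_mulVec_pos (by simpa [conjTranspose_eq_transpose_of_trivial] using isHermitian_conjTranspose_mul_self X) fun x hx => ?_
    rw [star_trivial, hQsum]
    have hx' : X *ᵥ x ≠ 0 := fun h => hx (hker x h)
    have := dotProduct_self_star_pos_iff (v := X *ᵥ x)
    simp only [star_trivial] at this
    exact this.mpr hx'
  have hUnit : IsUnit (Xᵀ * X).det := hA.det_pos.ne'.isUnit
  set d : Fin m → ℝ := ((Xᵀ * X)⁻¹) *ᵥ c with hd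
  have hAd : (Xᵀ * X) *ᵥ d = c := by
    rw [hd, mulVec_mulVec, mul_nonsing_inv _ hUnit, one_mulVec]
  have ht : 0 < c ⬝ᵥ d := by
    have := hA.inv.dotProduct_mulVec_pos hc
    simpa [hd] using this
  set t := c ⬝ᵥ d with htdef
  -- symmetry consequences
  have hsymm : (Xᵀ * X)ᵀ = Xᵀ * X := by
    rw [transpose_mul, transpose_transpose]
  have hswap : ∀ u v : Fin m → ℝ, u ⬝ᵥ ((Xᵀ * X) *ᵥ v) = ((Xᵀ * X) *ᵥ u) ⬝ᵥ v := by
    intro u v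
    rw [dotProduct_mulVec, ← mulVec_transpose, hsymm]
  -- Q basics
  have hQnonneg : ∀ v : Fin m → ℝ, 0 ≤ v ⬝ᵥ ((Xᵀ * X) *ᵥ v) := by
    intro v
    rw [hQsum]
    exact Finset.sum_nonneg fun i _ => mul_self_nonneg _
  have hQzero : ∀ v : Fin m → ℝ, v ⬝ᵥ ((Xᵀ * X) *ᵥ v) = 0 → v = 0 := by
    intro v hv
    rw [hQsum] at hv
    refine hker v ?_
    have := dotProduct_self_star_eq_zero (v := X *ᵥ v)
    simp only [star_trivial] at this
    exact this.mp hv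
  -- y = X αhat
  have hy : y = X *ᵥ αhat := by
    funext i
    have hz : (y i - (X *ᵥ αhat) i) ^ 2 = 0 :=
      (Finset.sum_eq_zero_iff_of_nonneg (fun j _ => sq_nonneg _)).mp hy0' i (Finset.mem_univ i)
    exact sub_eq_zero.mp (sq_eq_zero_iff.mp hz)
  -- numerator and denominator rewrites
  have hnum : ∀ α : Fin m → ℝ, (∑ i, (y i - (X *ᵥ α) i) ^ 2)
      = (αhat - α) ⬝ᵥ ((Xᵀ * X) *ᵥ (αhat - α)) := by
    intro α
    rw [hQsum, dotProduct, mulVec_sub]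
    refine Finset.sum_congr rfl fun i _ => ?_
    rw [hy]
    simp [Pi.sub_apply, sq]
  have hden : ∀ α : Fin m → ℝ, c0 + c ⬝ᵥ α = -(c ⬝ᵥ (αhat - α)) := by
    intro α
    rw [dotProduct_sub]
    linarith
  -- decomposition: Q β = (c⬝β)²/t + Q (β - (c⬝β/t) • d)
  have hdecomp : ∀ β : Fin m → ℝ,
      β ⬝ᵥ ((Xᵀ * X) *ᵥ β) = (c ⬝ᵥ β) ^ 2 / t
        + (β - ((c ⬝ᵥ β) / t) • d) ⬝ᵥ ((Xᵀ * X) *ᵥ (β - ((c ⬝ᵥ β) / t) • d)) := by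
    intro β
    have e1 : β ⬝ᵥ ((Xᵀ * X) *ᵥ d) = c ⬝ᵥ β := by rw [hAd, dotProduct_comm]
    have e2 : d ⬝ᵥ ((Xᵀ * X) *ᵥ β) = c ⬝ᵥ β := by rw [hswap, hAd]
    have e3 : d ⬝ᵥ ((Xᵀ * X) *ᵥ d) = t := by rw [hAd, dotProduct_comm]
    rw [mulVec_sub, mulVec_smul, sub_dotProduct, dotProduct_sub, dotProduct_sub,
      smul_dotProduct, dotProduct_smul, smul_dotProduct, dotProduct_smul,
      e1, e2, e3, smul_eq_mul, smul_eq_mul, smul_eq_mul]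
    field_simp
    ring
  -- value of c0 + c⬝ᵥ· on the ray
  have hray0 : ∀ l : ℝ, c0 + c ⬝ᵥ (αhat + l • d) = l * t := by
    intro l
    rw [dotProduct_add, dotProduct_smul, smul_eq_mul]
    linarith
  -- g value on the ray
  have hgray : ∀ l : ℝ, l ≠ 0 → g (αhat + l • d) = 1 / t := by
    intro l hl
    have hsub : αhat - (αhat + l • d) = (-l) • d := by
      funext i
      simp only [Pi.sub_apply, Pi.add_apply, Pi.smul_apply, smul_eq_mul]
      ring
    have e3 : d ⬝ᵥ ((Xᵀ * X) *ᵥ d) = t := by rw [hAd, dotProduct_comm]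
    have hQl : ((-l) • d) ⬝ᵥ ((Xᵀ * X) *ᵥ ((-l) • d)) = l ^ 2 * t := by
      rw [mulVec_smul, smul_dotProduct, dotProduct_smul, e3, smul_eq_mul, smul_eq_mul]
      ring
    rw [hgdef, hnum, hsub, hQl, hray0]
    rw [div_eq_div_iff (by positivity) ht.ne']
    ring
  -- lower bound for g
  have hglb : ∀ α : Fin m → ℝ, c0 + c ⬝ᵥ α ≠ 0 → 1 / t ≤ g α := by
    intro α hα
    have hs : c ⬝ᵥ (αhat - α) ≠ 0 := fun h => hα (by rw [hden α, h, neg_zero])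
    rw [hgdef, hnum α, hden α, neg_sq, hdecomp (αhat - α)]
    set s := c ⬝ᵥ (αhat - α) with hsdef
    set q := ((αhat - α) - (s / t) • d) ⬝ᵥ ((Xᵀ * X) *ᵥ ((αhat - α) - (s / t) • d)) with hqdef
    have hq : 0 ≤ q := hQnonneg _
    have hs2 : (0:ℝ) < s ^ 2 := by positivity
    rw [div_le_div_iff₀ ht hs2]
    have e : s ^ 2 / t * t = s ^ 2 := div_mul_cancel₀ _ ht.ne'
    nlinarith [mul_nonneg hq ht.le]
  -- main set equality
  ext α
  simp only [Set.mem_setOf_eq]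
  constructor
  · rintro ⟨h1, h2⟩
    have hub : g α ≤ 1 / t := by
      have := h2 (αhat + (1:ℝ) • d) (by rw [hray0]; simpa using ht.ne')
      rwa [hgray 1 one_ne_zero] at this
    have hs : c ⬝ᵥ (αhat - α) ≠ 0 := fun h => h1 (by rw [hden α, h, neg_zero])
    -- show the orthogonal part vanishes
    have hgval : g α = ((c ⬝ᵥ (αhat - α)) ^ 2 / t
        + ((αhat - α) - ((c ⬝ᵥ (αhat - α)) / t) • d) ⬝ᵥ
            ((Xᵀ * X) *ᵥ ((αhat - α) - ((c ⬝ᵥ (αhat - α)) / t) • d)))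
        / (c ⬝ᵥ (αhat - α)) ^ 2 := by
      rw [hgdef, hnum α, hden α, neg_sq, hdecomp (αhat - α)]
    set s := c ⬝ᵥ (αhat - α) with hsdef
    set q := ((αhat - α) - (s / t) • d) ⬝ᵥ ((Xᵀ * X) *ᵥ ((αhat - α) - (s / t) • d)) with hqdef
    have hq : 0 ≤ q := hQnonneg _
    have hs2 : (0:ℝ) < s ^ 2 := by positivity
    have hq0 : q = 0 := by
      rw [hgval] at hub
      rw [div_le_div_iff₀ hs2 ht] at hub
      have e : s ^ 2 / t * t = s ^ 2 := div_mul_cancel₀ _ ht.ne'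
      nlinarith
    have hw : (αhat - α) - (s / t) • d = 0 := hQzero _ hq0
    refine ⟨-(s / t), neg_ne_zero.mpr (div_ne_zero hs ht.ne'), ?_⟩
    funext i
    have hwi := congrFun hw i
    simp only [Pi.sub_apply, Pi.smul_apply, smul_eq_mul, Pi.zero_apply] at hwi
    simp only [Pi.add_apply, Pi.smul_apply, smul_eq_mul]
    linarith
  · rintro ⟨l, hl, rfl⟩
    refine ⟨by rw [hray0]; exact mul_ne_zero hl ht.ne', fun α' hα' => ?_⟩
    rw [hgray l hl]
    exact hglb α' hα'
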